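/- arXiv:2410.24106 — 3 statements merged into one kernel-verified Lean document; each statement's English description precedes it below -/
import Mathlib

section
/- Let λ₁ ≥ … ≥ λ_N > 0 and 0 < n < N. Over all vectors (π₁,…,π_N) with 0 < πᵢ ≤ 1 and Σᵢ πᵢ = n, the minimum of Σᵢ λᵢ²(πᵢ⁻¹ − 1) is attained at a vector of the form πᵢ = 1 for i ≤ t and πᵢ = (n−t)λᵢ / Σ_{k=t+1}^N λ_k for i > t, for some t ∈ {0,…,n−1}. -/
open Finset

private lemma convex_pt (a p q : ℝ) (hp : 0 < p) (hq : 0 < q) :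
    a ^ 2 / p + a ^ 2 / p ^ 2 * (p - q) ≤ a ^ 2 / q := by
  have h : a ^ 2 / q - (a ^ 2 / p + a ^ 2 / p ^ 2 * (p - q)) = a ^ 2 * (p - q) ^ 2 / (q * p ^ 2) := by
    field_simp
    ring
  have h2 : 0 ≤ a ^ 2 * (p - q) ^ 2 / (q * p ^ 2) := by positivity
  linarith

/-- Optimal inclusion probabilities for the unbiased estimator: for `λ₁ ≥ … ≥ λ_N > 0` and
`0 < n < N`, the minimum over `{π ∈ (0,1]^N : Σᵢ πᵢ = n}` of `Σᵢ λᵢ²(πᵢ⁻¹ − 1)` is attained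
at a vector with `πᵢ = 1` for `i ≤ t` and `πᵢ = (n−t)λᵢ / Σ_{k>t} λ_k` for `i > t`,
for some `t ∈ {0,…,n−1}`. (Indices are 0-based: `i ≤ t` in the paper is `i.val < t` here.) -/
theorem optimal_unbiased_inclusion_probabilities
    {N n : ℕ} (hn : 0 < n) (hnN : n < N) (lam : Fin N → ℝ)
    (hpos : ∀ i, 0 < lam i)
    (hsort : ∀ i j : Fin N, i ≤ j → lam j ≤ lam i) :
    ∃ t : ℕ, t < n ∧
      (let p : Fin N → ℝ := fun i =>
        if (i : ℕ) < t then 1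
        else ((n : ℝ) - t) * lam i /
          ∑ k ∈ Finset.univ.filter (fun k : Fin N => t ≤ (k : ℕ)), lam k
      (∀ i, 0 < p i ∧ p i ≤ 1) ∧ (∑ i, p i = n) ∧
        ∀ q : Fin N → ℝ, (∀ i, 0 < q i ∧ q i ≤ 1) → (∑ i, q i = n) →
          ∑ i, (lam i) ^ 2 * (1 / p i - 1) ≤ ∑ i, (lam i) ^ 2 * (1 / q i - 1)) := by
  classical
  set S : ℕ → ℝ := fun t => ∑ k ∈ Finset.univ.filter (fun k : Fin N => t ≤ (k : ℕ)), lam k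
    with hSdef
  set lam' : ℕ → ℝ := fun m => if h : m < N then lam ⟨m, h⟩ else 0 with hlamdef
  have hSpos : ∀ t : ℕ, t < N → 0 < S t := by
    intro t ht
    apply Finset.sum_pos
    · intro i _; exact hpos i
    · exact ⟨⟨t, ht⟩, by simp⟩
  have hSstep : ∀ t : ℕ, t < N → S t = lam' t + S (t + 1) := by
    intro t ht
    have hset : Finset.univ.filter (fun k : Fin N => t ≤ (k : ℕ))
        = insert (⟨t, ht⟩ : Fin N) (Finset.univ.filter (fun k : Fin N => t + 1 ≤ (k : ℕ))) := by
      ext i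
      simp only [mem_filter, mem_univ, true_and, mem_insert, Fin.ext_iff]
      omega
    have hnotmem : (⟨t, ht⟩ : Fin N) ∉ Finset.univ.filter (fun k : Fin N => t + 1 ≤ (k : ℕ)) := by
      simp
    simp only [hSdef, hset, Finset.sum_insert hnotmem, hlamdef, dif_pos ht]
  -- the predicate
  have hPex : ∃ t : ℕ, t < n ∧ ((n : ℝ) - t) * lam' t ≤ S t := by
    refine ⟨n - 1, by omega, ?_⟩
    have h1 : n - 1 < N := by omega
    have h2 : n < N := hnN
    have hstep := hSstep (n - 1) h1
    have hrw : (n : ℕ) - 1 + 1 = n := by omega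
    rw [hrw] at hstep
    have hcast : ((n : ℝ) - ((n - 1 : ℕ) : ℝ)) = 1 := by
      have : ((n - 1 : ℕ) : ℝ) = (n : ℝ) - 1 := by
        push_cast [Nat.cast_sub hn]; ring
      rw [this]; ring
    rw [hcast, one_mul, hstep]
    have := hSpos n h2
    linarith
  let t := Nat.find hPex
  have htP : t < n ∧ ((n : ℝ) - t) * lam' t ≤ S t := Nat.find_spec hPex
  have htn : t < n := htP.1
  have htN : t < N := by omega
  have hA : ((n : ℝ) - t) * lam ⟨t, htN⟩ ≤ S t := by
    have h := htP.2
    simp only [hlamdef] at h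
    rwa [dif_pos htN] at h
  have hntpos : (0 : ℝ) < (n : ℝ) - t := by
    have : (t : ℝ) < n := by exact_mod_cast htn
    linarith
  have hStpos : 0 < S t := hSpos t htN
  -- minimality consequence
  have hB : ∀ i : Fin N, (i : ℕ) < t → S t < ((n : ℝ) - t) * lam i := by
    intro i hi
    have htpos : 0 < t := by omega
    have hmin := Nat.find_min hPex (m := t - 1) (by omega)
    push_neg at hmin
    have h1 : t - 1 < n := by omega
    have h2 := hmin h1
    have h3 : t - 1 < N := by omega
    simp only [hlamdef] at h2
    rw [dif_pos h3] at h2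
    have hstep := hSstep (t - 1) h3
    have hrw : t - 1 + 1 = t := by omega
    rw [hrw] at hstep
    simp only [hlamdef, dif_pos h3] at hstep
    have hcast : ((t - 1 : ℕ) : ℝ) = (t : ℝ) - 1 := by
      push_cast [Nat.cast_sub htpos]; ring
    rw [hcast] at h2
    -- h2 : S (t-1) < (n - (t-1)) * lam ⟨t-1,_⟩
    have key : S t < ((n : ℝ) - t) * lam ⟨t - 1, h3⟩ := by
      rw [hstep] at h2
      nlinarith
    have hle : lam ⟨t - 1, h3⟩ ≤ lam i := by
      apply hsort
      simp only [Fin.le_def]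
      omega
    nlinarith
  refine ⟨t, htn, ?_⟩
  dsimp only
  set p : Fin N → ℝ := fun i =>
    if (i : ℕ) < t then 1
    else ((n : ℝ) - t) * lam i / ∑ k ∈ Finset.univ.filter (fun k : Fin N => t ≤ (k : ℕ)), lam k
    with hpdef
  have hpS : ∀ i : Fin N, ¬ ((i : ℕ) < t) → p i = ((n : ℝ) - t) * lam i / S t := by
    intro i hi
    simp only [hpdef, if_neg hi, hSdef]
  have hfeas : ∀ i, 0 < p i ∧ p i ≤ 1 := by
    intro i
    by_cases hi : (i : ℕ) < t
    · simp [hpdef, hi]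
    · rw [hpS i hi]
      constructor
      · exact div_pos (mul_pos hntpos (hpos i)) hStpos
      · rw [div_le_one hStpos]
        have hle : lam i ≤ lam ⟨t, htN⟩ := by
          apply hsort
          simp only [Fin.le_def]
          omega
        nlinarith
  have hcardlt : (Finset.univ.filter (fun i : Fin N => (i : ℕ) < t)).card = t := by
    have hset : Finset.univ.filter (fun i : Fin N => (i : ℕ) < t)
        = Finset.Iio (⟨t, htN⟩ : Fin N) := by
      ext i
      simp [Finset.mem_Iio, Fin.lt_def]
    rw [hset, Fin.card_Iio]
  have hsum : ∑ i, p i = n := by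
    rw [← Finset.sum_filter_add_sum_filter_not Finset.univ (fun i : Fin N => (i : ℕ) < t)]
    have h1 : ∑ i ∈ Finset.univ.filter (fun i : Fin N => (i : ℕ) < t), p i = t := by
      have hc : ∀ i ∈ Finset.univ.filter (fun i : Fin N => (i : ℕ) < t), p i = 1 := by
        intro i hi
        simp only [mem_filter] at hi
        simp [hpdef, hi.2]
      rw [Finset.sum_congr rfl hc, Finset.sum_const, hcardlt, nsmul_eq_mul, mul_one]
    have h2 : ∑ i ∈ Finset.univ.filter (fun i : Fin N => ¬ (i : ℕ) < t), p i = (n : ℝ) - t := by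
      have hc : ∀ i ∈ Finset.univ.filter (fun i : Fin N => ¬ (i : ℕ) < t),
          p i = ((n : ℝ) - t) * lam i / S t := by
        intro i hi
        simp only [mem_filter] at hi
        exact hpS i hi.2
      rw [Finset.sum_congr rfl hc]
      have hfilter : Finset.univ.filter (fun i : Fin N => ¬ (i : ℕ) < t)
          = Finset.univ.filter (fun i : Fin N => t ≤ (i : ℕ)) := by
        apply Finset.filter_congr
        intro i _
        simp [not_lt]
      rw [hfilter, ← Finset.sum_div, ← Finset.mul_sum]
      have hfold : (∑ k ∈ Finset.univ.filter (fun k : Fin N => t ≤ (k : ℕ)), lam k) = S t := rfl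
      rw [hfold, mul_div_assoc, div_self hStpos.ne', mul_one]
    rw [h1, h2]; ring
  refine ⟨hfeas, hsum, ?_⟩
  intro q hq hqsum
  have key : ∑ i, (lam i) ^ 2 / p i ≤ ∑ i, (lam i) ^ 2 / q i := by
    set d : ℝ := S t / ((n : ℝ) - t) with hddef
    have hdpos : 0 < d := by positivity
    have hstep1 : ∑ i, ((lam i) ^ 2 / p i + (lam i) ^ 2 / (p i) ^ 2 * (p i - q i))
        ≤ ∑ i, (lam i) ^ 2 / q i := by
      apply Finset.sum_le_sum
      intro i _
      exact convex_pt (lam i) (p i) (q i) (hfeas i).1 (hq i).1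
    have hstep2 : ∀ i : Fin N, d ^ 2 * (p i - q i) ≤ (lam i) ^ 2 / (p i) ^ 2 * (p i - q i) := by
      intro i
      by_cases hi : (i : ℕ) < t
      · have hp1 : p i = 1 := by simp [hpdef, hi]
        rw [hp1]
        have hqi : q i ≤ 1 := (hq i).2
        have hd_lt : d < lam i := by
          have := hB i hi
          rw [hddef, div_lt_iff₀ hntpos]
          linarith
        have : d ^ 2 ≤ (lam i) ^ 2 := by nlinarith
        nlinarith
      · have hp : p i = lam i / d := by
          rw [hpS i hi, hddef]
          field_simp
        have hlam : lam i ≠ 0 := ne_of_gt (hpos i)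
        rw [hp]
        have : (lam i) ^ 2 / (lam i / d) ^ 2 = d ^ 2 := by
          field_simp
        rw [this]
    have hstep3 : (0 : ℝ) ≤ ∑ i, (lam i) ^ 2 / (p i) ^ 2 * (p i - q i) := by
      have h0 : ∑ i, d ^ 2 * (p i - q i) = 0 := by
        rw [← Finset.mul_sum, Finset.sum_sub_distrib, hsum, hqsum, sub_self, mul_zero]
      calc (0 : ℝ) = ∑ i, d ^ 2 * (p i - q i) := h0.symm
        _ ≤ _ := Finset.sum_le_sum (fun i _ => hstep2 i)
    calc ∑ i, (lam i) ^ 2 / p i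
        ≤ ∑ i, (lam i) ^ 2 / p i + ∑ i, (lam i) ^ 2 / (p i) ^ 2 * (p i - q i) := by linarith
      _ = ∑ i, ((lam i) ^ 2 / p i + (lam i) ^ 2 / (p i) ^ 2 * (p i - q i)) := by
          rw [Finset.sum_add_distrib]
      _ ≤ ∑ i, (lam i) ^ 2 / q i := hstep1
  have hexpand : ∀ r : Fin N → ℝ,
      ∑ i, (lam i) ^ 2 * (1 / r i - 1) = (∑ i, (lam i) ^ 2 / r i) - ∑ i, (lam i) ^ 2 := by
    intro r
    rw [← Finset.sum_sub_distrib]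
    apply Finset.sum_congr rfl
    intro i _
    ring
  rw [hexpand p, hexpand q]
  linarith
end

section
/- Let λ₁ ≥ … ≥ λ_N > 0, 0 < n < N, and t ∈ {0,…,n−1} satisfy λ_{t+1} < (Σ_{k=t+1}^N λ_k)/(n−t). Then setting πᵢ = 1 for i ≤ t and πᵢ = (n−t)λᵢ/Σ_{k=t+1}^N λ_k for i > t yields a valid probability vector: 0 < πᵢ ≤ 1 for all i and Σᵢ πᵢ = n. -/
/-- Feasibility of the unbiased-strategy probabilities: if `λ₁ ≥ … ≥ λ_N > 0`, `0 < n < N`,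
`t < n`, and `λ_{t+1} < (Σ_{k>t} λ_k)/(n−t)` (0-based: `lam ⟨t⟩`), then setting `πᵢ = 1` for
`i ≤ t` and `πᵢ = (n−t)λᵢ/Σ_{k>t} λ_k` for `i > t` gives `0 < πᵢ ≤ 1` and `Σᵢ πᵢ = n`. -/
theorem unbiased_probabilities_valid
    {N n t : ℕ} (hn : 0 < n) (hnN : n < N) (ht : t < n)
    (lam : Fin N → ℝ) (hpos : ∀ i, 0 < lam i)
    (hsort : ∀ i j : Fin N, i ≤ j → lam j ≤ lam i)
    (hcond : lam ⟨t, lt_trans ht hnN⟩ <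
      (∑ k ∈ Finset.univ.filter (fun k : Fin N => t ≤ (k : ℕ)), lam k) / ((n : ℝ) - t)) :
    (let p : Fin N → ℝ := fun i =>
      if (i : ℕ) < t then 1
      else ((n : ℝ) - t) * lam i /
        ∑ k ∈ Finset.univ.filter (fun k : Fin N => t ≤ (k : ℕ)), lam k
    (∀ i, 0 < p i ∧ p i ≤ 1) ∧ ∑ i, p i = n) := by
  intro p
  set tN : Fin N := ⟨t, lt_trans ht hnN⟩ with htN
  set S := ∑ k ∈ Finset.univ.filter (fun k : Fin N => t ≤ (k : ℕ)), lam k with hS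
  have hnt : (0:ℝ) < (n:ℝ) - t := by
    have : (t:ℝ) < n := by exact_mod_cast ht
    linarith
  have hmem : tN ∈ Finset.univ.filter (fun k : Fin N => t ≤ (k : ℕ)) := by
    simp [htN]
  have hSpos : 0 < S := Finset.sum_pos (fun i _ => hpos i) ⟨tN, hmem⟩
  have hkey : ((n:ℝ) - t) * lam tN < S := by
    rw [mul_comm]; exact (lt_div_iff₀ hnt).mp hcond
  have hple : ∀ i : Fin N, 0 < p i ∧ p i ≤ 1 := by
    intro i
    by_cases hi : (i : ℕ) < t
    · simp [p, hi]
    · have hti : tN ≤ i := by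
        simp [Fin.le_def, htN]; omega
      have hli : lam i ≤ lam tN := hsort tN i hti
      constructor
      · simp only [p, hi, if_false]
        exact div_pos (mul_pos hnt (hpos i)) hSpos
      · simp only [p, hi, if_false]
        rw [div_le_one hSpos]
        calc ((n:ℝ) - t) * lam i ≤ ((n:ℝ) - t) * lam tN := by
              exact mul_le_mul_of_nonneg_left hli (le_of_lt hnt)
          _ ≤ S := le_of_lt hkey
  refine ⟨hple, ?_⟩
  have hsplit : ∑ i, p i =
      ∑ i ∈ Finset.univ.filter (fun i : Fin N => (i:ℕ) < t), p i
      + ∑ i ∈ Finset.univ.filter (fun i : Fin N => ¬ (i:ℕ) < t), p i :=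
    (Finset.sum_filter_add_sum_filter_not _ _ _).symm
  have h1 : ∑ i ∈ Finset.univ.filter (fun i : Fin N => (i:ℕ) < t), p i = t := by
    have e1 : ∀ i ∈ Finset.univ.filter (fun i : Fin N => (i:ℕ) < t), p i = 1 := by
      intro i hi
      simp only [Finset.mem_filter] at hi
      simp [p, hi.2]
    rw [Finset.sum_congr rfl e1, Finset.sum_const, nsmul_eq_mul, mul_one]
    have : Finset.univ.filter (fun i : Fin N => (i:ℕ) < t) = Finset.Iio tN := by
      ext i; simp [Fin.lt_def, htN]
    rw [this, Fin.card_Iio]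
  have hfeq : (Finset.univ.filter (fun i : Fin N => ¬ (i:ℕ) < t)) =
      (Finset.univ.filter (fun k : Fin N => t ≤ (k : ℕ))) := by
    ext i; simp
  have h2 : ∑ i ∈ Finset.univ.filter (fun i : Fin N => ¬ (i:ℕ) < t), p i = (n:ℝ) - t := by
    have e2 : ∀ i ∈ Finset.univ.filter (fun k : Fin N => t ≤ (k : ℕ)),
        p i = ((n:ℝ) - t) * lam i / S := by
      intro i hi
      simp only [Finset.mem_filter] at hi
      simp [p, Nat.not_lt.mpr hi.2]
      rfl
    rw [hfeq, Finset.sum_congr rfl e2, ← Finset.sum_div, ← Finset.mul_sum, ← hS,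
      mul_div_assoc, div_self (ne_of_gt hSpos), mul_one]
  rw [hsplit, h1, h2]; ring
end

section
/- Let X₁,…,X_N be pairwise orthogonal with ‖Xᵢ‖ = λᵢ, and for each client c ∈ {1,…,C} let (z₁^{(c)},…,z_N^{(c)}) be i.i.d. copies of indicator vectors with marginals πᵢ. With fixed multipliers wᵢ ∈ ℝ and W̄ = (1/C) Σ_c Σᵢ zᵢ^{(c)} wᵢ Xᵢ, the expected squared error equals E‖Y − W̄‖² = Σᵢ λᵢ² + Σᵢ λᵢ² wᵢ πᵢ (−2 + wᵢ/C + wᵢπᵢ(C−1)/C), where Y = Σᵢ Xᵢ. -/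
open MeasureTheory ProbabilityTheory RealInnerProductSpace Finset

lemma norm_sum_smul_sq' {E : Type*} [NormedAddCommGroup E] [InnerProductSpace ℝ E]
    {N : ℕ} (X : Fin N → E)
    (horth : ∀ i j : Fin N, i ≠ j → ⟪X i, X j⟫ = 0) (a : Fin N → ℝ) :
    ‖∑ i, a i • X i‖ ^ 2 = ∑ i, (a i) ^ 2 * ‖X i‖ ^ 2 := by
  rw [← real_inner_self_eq_norm_sq, sum_inner]
  refine Finset.sum_congr rfl fun i _ => ?_
  rw [inner_sum, Finset.sum_eq_single i]
  · rw [real_inner_smul_left, real_inner_smul_right, real_inner_self_eq_norm_sq]; ring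
  · intro j _ hj
    rw [real_inner_smul_left, real_inner_smul_right, horth i j (Ne.symm hj)]; ring
  · simp

lemma double_sum_ite' {C : ℕ} (p q : ℝ) :
    ∑ c : Fin C, ∑ c' : Fin C, (if c = c' then p else q)
      = (C : ℝ) * p + ((C : ℝ) * (C : ℝ) - (C : ℝ)) * q := by
  have h1 : ∀ c : Fin C, (∑ c' : Fin C, if c = c' then p else q) = p + ((C : ℝ) - 1) * q := by
    intro c
    have h : ∀ c' : Fin C, (if c = c' then p else q)
        = (if c = c' then p - q else 0) + q := by intro c'; split_ifs <;> ring
    simp only [h, Finset.sum_add_distrib, Finset.sum_ite_eq, Finset.mem_univ, if_true,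
      Finset.sum_const, Finset.card_univ, Fintype.card_fin, nsmul_eq_mul]
    ring
  simp only [h1, Finset.sum_const, Finset.card_univ, Fintype.card_fin, nsmul_eq_mul]
  ring

/-- Frobenius discrepancy of the collective estimator: with pairwise orthogonal `Xᵢ`,
`C` i.i.d. copies of an indicator vector with marginals `πᵢ`, fixed multipliers `wᵢ`, and
`W̄ = (1/C) Σ_c Σᵢ zᵢ^{(c)} wᵢ Xᵢ`,
`E‖Y − W̄‖² = Σᵢ λᵢ² + Σᵢ λᵢ² wᵢ πᵢ (−2 + wᵢ/C + wᵢπᵢ(C−1)/C)`. -/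
theorem collective_estimator_frobenius_discrepancy
    {Ω : Type*} [MeasurableSpace Ω] (μ : Measure Ω) [IsProbabilityMeasure μ]
    {E : Type*} [NormedAddCommGroup E] [InnerProductSpace ℝ E]
    {N C : ℕ} (hC : 1 ≤ C) (X : Fin N → E)
    (horth : ∀ i j : Fin N, i ≠ j → ⟪X i, X j⟫ = 0)
    (z : Fin C → Ω → (Fin N → ℝ)) (hzm : ∀ c, Measurable (z c))
    (hz01 : ∀ c ω i, z c ω i = 0 ∨ z c ω i = 1)
    (hindep : iIndepFun z μ)
    (hident : ∀ c c' : Fin C, Measure.map (z c) μ = Measure.map (z c') μ)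
    (π : Fin N → ℝ) (hπ : ∀ (c : Fin C) (i : Fin N), (μ {ω | z c ω i = 1}).toReal = π i)
    (w : Fin N → ℝ) :
    ∫ ω, ‖(∑ i, X i) - (1 / (C : ℝ)) • ∑ c, ∑ i, (z c ω i * w i) • X i‖ ^ 2 ∂μ
      = (∑ i, ‖X i‖ ^ 2)
        + ∑ i, ‖X i‖ ^ 2 * w i * π i *
            (-2 + w i / C + w i * π i * ((C : ℝ) - 1) / C) := by
  have hC0 : (C : ℝ) ≠ 0 := Nat.cast_ne_zero.mpr (by omega)
  set a : ℝ := 1 / (C : ℝ) with ha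
  set L : Fin N → ℝ := fun i => ‖X i‖ ^ 2 with hL
  have meas : ∀ (c : Fin C) (i : Fin N), Measurable fun ω => z c ω i :=
    fun c i => (measurable_pi_apply i).comp (hzm c)
  have hset : ∀ c i, MeasurableSet {ω | z c ω i = 1} :=
    fun c i => (meas c i) (measurableSet_singleton 1)
  have hind : ∀ c i, (fun ω => z c ω i)
      = Set.indicator {ω | z c ω i = 1} (fun _ => (1 : ℝ)) := by
    intro c i; funext ω
    rcases hz01 c ω i with h | h <;> simp [Set.indicator_apply, h]
  have hInt : ∀ c i, Integrable (fun ω => z c ω i) μ := by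
    intro c i; rw [hind c i]
    exact (integrable_const (1 : ℝ)).indicator (hset c i)
  have hI1 : ∀ c i, ∫ ω, z c ω i ∂μ = π i := by
    intro c i
    rw [hind c i, integral_indicator_const _ (hset c i), smul_eq_mul, mul_one, measureReal_def, hπ]
  have hbd : ∀ (c : Fin C) (i : Fin N) (ω : Ω), ‖z c ω i‖ ≤ 1 := by
    intro c i ω; rcases hz01 c ω i with h | h <;> simp [h]
  have hIntmul : ∀ (c c' : Fin C) (i : Fin N),
      Integrable (fun ω => z c ω i * z c' ω i) μ := by
    intro c c' i
    exact Integrable.bdd_mul (hInt c' i) (meas c i).aestronglyMeasurable (ae_of_all _ (hbd c i))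
  have hI2 : ∀ (c c' : Fin C) (i : Fin N),
      ∫ ω, z c ω i * z c' ω i ∂μ = if c = c' then π i else π i * π i := by
    intro c c' i
    by_cases hcc : c = c'
    · subst hcc
      have h : (fun ω => z c ω i * z c ω i) = fun ω => z c ω i := by
        funext ω; rcases hz01 c ω i with h | h <;> simp [h]
      rw [if_pos rfl, h, hI1]
    · rw [if_neg hcc]
      have hIF : IndepFun (fun ω => z c ω i) (fun ω => z c' ω i) μ :=
        (hindep.indepFun hcc).comp (measurable_pi_apply i) (measurable_pi_apply i)
      rw [hIF.integral_fun_mul_eq_mul_integral (meas c i).aestronglyMeasurable (meas c' i).aestronglyMeasurable,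
        hI1, hI1]
  -- pointwise expansion
  have hpt : ∀ ω : Ω,
      ‖(∑ i, X i) - a • ∑ c, ∑ i, (z c ω i * w i) • X i‖ ^ 2
        = (∑ i, L i)
          - 2 * a * (∑ c, ∑ i, z c ω i * (w i * L i))
          + a ^ 2 * ∑ c, ∑ c', ∑ i, (z c ω i * z c' ω i) * (w i * w i * L i) := by
    intro ω
    have hvec : (∑ i, X i) - a • ∑ c, ∑ i, (z c ω i * w i) • X i
        = ∑ i, (1 - a * ∑ c, z c ω i * w i) • X i := by
      rw [Finset.sum_comm, Finset.smul_sum]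
      rw [← Finset.sum_sub_distrib]
      refine Finset.sum_congr rfl fun i _ => ?_
      rw [Finset.smul_sum, sub_smul, one_smul]
      congr 1
      rw [mul_smul, Finset.sum_smul, Finset.smul_sum]
    rw [hvec, norm_sum_smul_sq' X horth]
    have step : ∑ i, (1 - a * ∑ c, z c ω i * w i) ^ 2 * L i
        = ∑ i, (L i - 2 * a * (∑ c, z c ω i * (w i * L i))
            + a ^ 2 * ∑ c, ∑ c', (z c ω i * z c' ω i) * (w i * w i * L i)) := by
      refine Finset.sum_congr rfl fun i _ => ?_
      have h1 : ∑ c, z c ω i * (w i * L i) = (∑ c, z c ω i * w i) * L i := by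
        rw [Finset.sum_mul]; exact Finset.sum_congr rfl fun c _ => by ring
      have h2 : ∑ c, ∑ c', (z c ω i * z c' ω i) * (w i * w i * L i)
          = (∑ c, z c ω i * w i) * (∑ c', z c' ω i * w i) * L i := by
        rw [Finset.sum_mul_sum, Finset.sum_mul]
        refine Finset.sum_congr rfl fun c _ => ?_
        rw [Finset.sum_mul]
        exact Finset.sum_congr rfl fun c' _ => by ring
      rw [h1, h2]; ring
    rw [step, Finset.sum_add_distrib, Finset.sum_sub_distrib]
    congr 1
    · congr 1
      rw [← Finset.mul_sum]
      congr 1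
      exact Finset.sum_comm
    · rw [← Finset.mul_sum]
      congr 1
      rw [Finset.sum_comm]
      exact Finset.sum_congr rfl fun c _ => Finset.sum_comm
  simp only [hpt]
  -- integrability of the two random pieces
  have hIg : Integrable (fun ω => 2 * a * ∑ c, ∑ i, z c ω i * (w i * L i)) μ := by
    refine Integrable.const_mul ?_ _
    exact integrable_finset_sum _ fun c _ => integrable_finset_sum _ fun i _ =>
      (hInt c i).mul_const _
  have hIh : Integrable
      (fun ω => a ^ 2 * ∑ c, ∑ c', ∑ i, (z c ω i * z c' ω i) * (w i * w i * L i)) μ := by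
    refine Integrable.const_mul ?_ _
    exact integrable_finset_sum _ fun c _ => integrable_finset_sum _ fun c' _ =>
      integrable_finset_sum _ fun i _ => (hIntmul c c' i).mul_const _
  have hIfg : Integrable (fun ω => (∑ i, L i)
      - 2 * a * ∑ c, ∑ i, z c ω i * (w i * L i)) μ := (integrable_const _).sub hIg
  rw [integral_add hIfg hIh, integral_sub (integrable_const _) hIg,
    integral_const, probReal_univ, one_smul]
  rw [integral_const_mul, integral_const_mul,
    integral_finset_sum _ (fun c _ => integrable_finset_sum _ fun i _ => (hInt c i).mul_const _),
    integral_finset_sum _ (fun c _ => integrable_finset_sum _ fun c' _ =>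
      integrable_finset_sum _ fun i _ => (hIntmul c c' i).mul_const _)]
  have e1 : ∀ c : Fin C, ∫ ω, ∑ i, z c ω i * (w i * L i) ∂μ = ∑ i, π i * (w i * L i) := by
    intro c
    rw [integral_finset_sum _ fun i _ => (hInt c i).mul_const _]
    exact Finset.sum_congr rfl fun i _ => by rw [integral_mul_const, hI1]
  have e2 : ∀ c c' : Fin C, ∫ ω, ∑ i, (z c ω i * z c' ω i) * (w i * w i * L i) ∂μ
      = ∑ i, (if c = c' then π i else π i * π i) * (w i * w i * L i) := by
    intro c c'
    rw [integral_finset_sum _ fun i _ => (hIntmul c c' i).mul_const _]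
    exact Finset.sum_congr rfl fun i _ => by rw [integral_mul_const, hI2]
  have e2' : ∀ c : Fin C, ∫ ω, ∑ c', ∑ i, (z c ω i * z c' ω i) * (w i * w i * L i) ∂μ
      = ∑ c' : Fin C, ∑ i, (if c = c' then π i else π i * π i) * (w i * w i * L i) := by
    intro c
    rw [integral_finset_sum _ fun c' _ => integrable_finset_sum _ fun i _ =>
      (hIntmul c c' i).mul_const _]
    exact Finset.sum_congr rfl fun c' _ => e2 c c'
  simp only [e1, e2']
  rw [Finset.sum_const, Finset.card_univ, Fintype.card_fin, nsmul_eq_mul]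
  have e3 : ∑ c : Fin C, ∑ c' : Fin C, ∑ i,
      (if c = c' then π i else π i * π i) * (w i * w i * L i)
      = ∑ i, ((C : ℝ) * π i + ((C : ℝ) * (C : ℝ) - (C : ℝ)) * (π i * π i))
          * (w i * w i * L i) := by
    have swap : (∑ c : Fin C, ∑ c' : Fin C, ∑ i, (if c = c' then π i else π i * π i) *
        (w i * w i * L i)) = ∑ i, ∑ c : Fin C, ∑ c' : Fin C,
        (if c = c' then π i else π i * π i) * (w i * w i * L i) :=
      (Finset.sum_congr rfl fun c _ => Finset.sum_comm).trans Finset.sum_comm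
    rw [swap]
    refine Finset.sum_congr rfl fun i _ => ?_
    rw [← double_sum_ite' (C := C) (π i) (π i * π i), Finset.sum_mul]
    refine Finset.sum_congr rfl fun c _ => ?_
    rw [Finset.sum_mul]
  rw [e3]
  have key : a ^ 2 * ∑ i, ((C : ℝ) * π i + ((C : ℝ) * (C : ℝ) - (C : ℝ)) * (π i * π i))
          * (w i * w i * L i)
      - 2 * a * ((C : ℝ) * ∑ i, π i * (w i * L i))
      = ∑ i, ‖X i‖ ^ 2 * w i * π i * (-2 + w i / C + w i * π i * ((C : ℝ) - 1) / C) := by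
    rw [Finset.mul_sum, Finset.mul_sum, Finset.mul_sum, ← Finset.sum_sub_distrib]
    refine Finset.sum_congr rfl fun i _ => ?_
    simp only [hL, ha]
    field_simp
    ring
  linarith [key]
end
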